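/- arXiv:2002.11518 — 9 statements merged into one kernel-verified Lean document; each statement's English description precedes it below -/
import Mathlib

section
/- For all natural numbers n and m with n ≠ m, there is no surjective monotone (order-preserving) map from the poset F_n onto the poset F_m; hence the family {F_n : n ∈ ℕ} is an antichain with respect to the relation 'is an order-preserving image of'. -/
inductive FElem : Type
  | r : FElem
  | t : FElem
  | x : ℕ → FElem
  | y : ℕ → FElem

inductive FGen (n : ℕ) : FElem → FElem → Prop
  | rx : FGen n FElem.r (FElem.x (n+2))
  | ry : FGen n FElem.r (FElem.y (n+1))
  | xx : ∀ i : ℕ, i ≤ n+1 → FGen n (FElem.x (i+1)) (FElem.x i)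
  | yy : ∀ j : ℕ, j ≤ n → FGen n (FElem.y (j+1)) (FElem.y j)
  | xt : FGen n (FElem.x 0) FElem.t
  | yt : FGen n (FElem.y 0) FElem.t
  | yx : ∀ i : ℕ, i ≤ n → FGen n (FElem.y (i+1)) (FElem.x i)
  | xy : ∀ i : ℕ, 1 ≤ i → i ≤ n → FGen n (FElem.x (i+1)) (FElem.y i)

/-- The order of the poset `F_n`: the reflexive transitive closure of the
generating relations. -/
def FLe (n : ℕ) : FElem → FElem → Prop := Relation.ReflTransGen (FGen n)

/-- The underlying set of the poset `F_n`. -/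
def FCarrier (n : ℕ) : Set FElem :=
  {a | a = FElem.r ∨ a = FElem.t ∨ (∃ i ≤ n+2, a = FElem.x i) ∨ (∃ j ≤ n+1, a = FElem.y j)}

/-- Closed form of the order of `F_n`. -/
def D (n : ℕ) : FElem → FElem → Prop
  | .r, .r => True
  | .r, .t => True
  | .r, .x i => i ≤ n+2
  | .r, .y j => j ≤ n+1
  | .t, .r => False
  | .t, .t => True
  | .t, .x _ => False
  | .t, .y _ => False
  | .x _, .r => False
  | .x i, .t => i ≤ n+2
  | .x i, .x j => i = j ∨ (j ≤ i ∧ i ≤ n+2)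
  | .x i, .y j => 2 ≤ i ∧ j+1 ≤ i ∧ j ≤ n ∧ 1 ≤ n ∧ i ≤ n+2
  | .y _, .r => False
  | .y j, .t => j ≤ n+1
  | .y j, .x i => i+1 ≤ j ∧ i ≤ n ∧ j ≤ n+1
  | .y j, .y i => j = i ∨ (i ≤ j ∧ j ≤ n+1)

lemma D_refl (n : ℕ) (a : FElem) : D n a a := by
  cases a <;> simp [D]

lemma FGen_D {n : ℕ} {a b : FElem} (h : FGen n a b) : D n a b := by
  cases h <;> simp only [D] <;> omega

lemma D_trans {n : ℕ} {a b c : FElem} (hab : D n a b) (hbc : D n b c) : D n a c := by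
  cases a <;> cases b <;> cases c <;> simp only [D] at hab hbc ⊢ <;> omega

lemma FLe_D {n : ℕ} {a b : FElem} (h : FLe n a b) : D n a b := by
  have h' : Relation.ReflTransGen (FGen n) a b := h
  clear h
  induction h' with
  | refl => exact D_refl n a
  | tail _ hg ih => exact D_trans ih (FGen_D hg)

lemma FLe_xx_aux (n : ℕ) : ∀ d j, j + d ≤ n+2 →
    Relation.ReflTransGen (FGen n) (.x (j+d)) (.x j) := by
  intro d
  induction d with
  | zero => intro j _; exact Relation.ReflTransGen.refl
  | succ k ih =>
      intro j h
      exact Relation.ReflTransGen.head (FGen.xx (j+k) (by omega)) (ih j (by omega))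

lemma FLe_yy_aux (n : ℕ) : ∀ d j, j + d ≤ n+1 →
    Relation.ReflTransGen (FGen n) (.y (j+d)) (.y j) := by
  intro d
  induction d with
  | zero => intro j _; exact Relation.ReflTransGen.refl
  | succ k ih =>
      intro j h
      exact Relation.ReflTransGen.head (FGen.yy (j+k) (by omega)) (ih j (by omega))

lemma FLe_xx' {n i j : ℕ} (h1 : j ≤ i) (h2 : i ≤ n+2) :
    Relation.ReflTransGen (FGen n) (.x i) (.x j) := by
  obtain ⟨d, rfl⟩ := Nat.exists_eq_add_of_le h1
  exact FLe_xx_aux n d j (by omega)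

lemma FLe_yy' {n i j : ℕ} (h1 : i ≤ j) (h2 : j ≤ n+1) :
    Relation.ReflTransGen (FGen n) (.y j) (.y i) := by
  obtain ⟨d, rfl⟩ := Nat.exists_eq_add_of_le h1
  exact FLe_yy_aux n d i (by omega)

lemma D_FLe {n : ℕ} {a b : FElem} (h : D n a b) : FLe n a b := by
  show Relation.ReflTransGen (FGen n) a b
  cases a with
  | r =>
    cases b with
    | r => exact Relation.ReflTransGen.refl
    | t =>
        exact Relation.ReflTransGen.head FGen.ry
          (Relation.ReflTransGen.tail (FLe_yy' (Nat.zero_le _) (le_refl _)) FGen.yt)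
    | x i =>
        simp only [D] at h
        exact Relation.ReflTransGen.head FGen.rx (FLe_xx' h (le_refl _))
    | y j =>
        simp only [D] at h
        exact Relation.ReflTransGen.head FGen.ry (FLe_yy' h (le_refl _))
  | t =>
    cases b with
    | t => exact Relation.ReflTransGen.refl
    | r => exact h.elim
    | x i => exact h.elim
    | y j => exact h.elim
  | x i =>
    cases b with
    | r => exact h.elim
    | t =>
        simp only [D] at h
        exact Relation.ReflTransGen.tail (FLe_xx' (Nat.zero_le _) h) FGen.xt
    | x j =>
        simp only [D] at h
        rcases h with rfl | ⟨h1, h2⟩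
        · exact Relation.ReflTransGen.refl
        · exact FLe_xx' h1 h2
    | y j =>
        simp only [D] at h
        obtain ⟨h2i, hji, hjn, hn, hin⟩ := h
        cases j with
        | zero =>
            exact Relation.ReflTransGen.tail
              (Relation.ReflTransGen.tail (FLe_xx' h2i hin) (FGen.xy 1 (le_refl _) hn))
              (FGen.yy 0 (Nat.zero_le _))
        | succ j' =>
            exact Relation.ReflTransGen.tail (FLe_xx' hji hin)
              (FGen.xy (j'+1) (by omega) (by omega))
  | y j =>
    cases b with
    | r => exact h.elim
    | t =>
        simp only [D] at h
        exact Relation.ReflTransGen.tail (FLe_yy' (Nat.zero_le _) h) FGen.yt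
    | x i =>
        simp only [D] at h
        exact Relation.ReflTransGen.tail (FLe_yy' h.1 h.2.2) (FGen.yx i h.2.1)
    | y i =>
        simp only [D] at h
        rcases h with rfl | ⟨h1, h2⟩
        · exact Relation.ReflTransGen.refl
        · exact FLe_yy' h1 h2

lemma FLe_iff_D (n : ℕ) (a b : FElem) : FLe n a b ↔ D n a b :=
  ⟨FLe_D, D_FLe⟩

/-- The incomparability gaps of `F_n` (in the position encoding). -/
def Igap (n g : ℕ) : Prop := 1 ≤ g ∧ g ≤ 2*n+4 ∧ (g ≤ 3 ∨ g = 2*n+4 ∨ g % 2 = 1)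

/-- Arithmetic form of the order: `pLe n j i` means "element at position j ≤ element
at position i" (positions listed from top: t, x0, y0, x1, y1, ..., x(n+2), r). -/
def pLe (n j i : ℕ) : Prop :=
  i = j ∨ (i < j ∧ ¬(j = i+1 ∧ Igap n i) ∧ ¬(n = 0 ∧ i = 2 ∧ j = 5))

/-- Element of `F_n` at position `k ∈ [0, 2n+6]`. -/
def elem (n k : ℕ) : FElem :=
  if k = 0 then .t else if k = 2*n+6 then .r
  else if k % 2 = 1 then .x ((k-1)/2) else .y ((k-2)/2)

lemma elem_zero (n : ℕ) : elem n 0 = .t := rfl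

lemma elem_last (n : ℕ) : elem n (2*n+6) = .r := by
  unfold elem
  rw [if_neg (by omega), if_pos rfl]

lemma elem_x (n a : ℕ) : elem n (2*a+1) = .x a := by
  unfold elem
  rw [if_neg (by omega), if_neg (by omega), if_pos (by omega)]
  congr 1
  omega

lemma elem_y (n a : ℕ) (h : a ≤ n+1) : elem n (2*a+2) = .y a := by
  unfold elem
  rw [if_neg (by omega), if_neg (by omega), if_neg (by omega)]
  congr 1
  omega

lemma pos_shape (n k : ℕ) (h : k ≤ 2*n+6) :
    (k = 0 ∧ elem n k = .t) ∨ (k = 2*n+6 ∧ elem n k = .r) ∨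
    (∃ a, a ≤ n+2 ∧ k = 2*a+1 ∧ elem n k = .x a) ∨
    (∃ a, a ≤ n+1 ∧ k = 2*a+2 ∧ elem n k = .y a) := by
  by_cases h0 : k = 0
  · exact Or.inl ⟨h0, by rw [h0]; rfl⟩
  by_cases h1 : k = 2*n+6
  · exact Or.inr (Or.inl ⟨h1, by rw [h1]; exact elem_last n⟩)
  by_cases h2 : k % 2 = 1
  · refine Or.inr (Or.inr (Or.inl ⟨(k-1)/2, by omega, by omega, ?_⟩))
    have : k = 2*((k-1)/2)+1 := by omega
    conv_lhs => rw [this]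
    exact elem_x _ _
  · refine Or.inr (Or.inr (Or.inr ⟨(k-2)/2, by omega, by omega, ?_⟩))
    have h3 : (k-2)/2 ≤ n+1 := by omega
    have : k = 2*((k-2)/2)+2 := by omega
    conv_lhs => rw [this]
    exact elem_y _ _ h3

lemma elem_mem (n k : ℕ) (h : k ≤ 2*n+6) : elem n k ∈ FCarrier n := by
  rcases pos_shape n k h with ⟨_, e⟩ | ⟨_, e⟩ | ⟨a, ha, _, e⟩ | ⟨a, ha, _, e⟩ <;> rw [e]
  · exact Or.inr (Or.inl rfl)
  · exact Or.inl rfl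
  · exact Or.inr (Or.inr (Or.inl ⟨a, ha, rfl⟩))
  · exact Or.inr (Or.inr (Or.inr ⟨a, ha, rfl⟩))

lemma carrier_shape (n : ℕ) (a : FElem) (h : a ∈ FCarrier n) :
    ∃ k, k ≤ 2*n+6 ∧ elem n k = a := by
  rcases h with rfl | rfl | ⟨i, hi, rfl⟩ | ⟨j, hj, rfl⟩
  · exact ⟨2*n+6, le_refl _, elem_last n⟩
  · exact ⟨0, by omega, rfl⟩
  · exact ⟨2*i+1, by omega, elem_x n i⟩
  · exact ⟨2*j+2, by omega, elem_y n j hj⟩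

def posOf (m : ℕ) : FElem → ℕ
  | .t => 0
  | .r => 2*m+6
  | .x i => 2*i+1
  | .y i => 2*i+2

lemma posOf_elem (m k : ℕ) (h : k ≤ 2*m+6) : posOf m (elem m k) = k := by
  rcases pos_shape m k h with ⟨hk, e⟩ | ⟨hk, e⟩ | ⟨a, _, hk, e⟩ | ⟨a, _, hk, e⟩ <;>
    rw [e] <;> simp only [posOf] <;> omega

lemma posOf_mem (m : ℕ) (a : FElem) (h : a ∈ FCarrier m) :
    posOf m a ≤ 2*m+6 ∧ elem m (posOf m a) = a := by
  rcases h with rfl | rfl | ⟨i, hi, rfl⟩ | ⟨j, hj, rfl⟩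
  · exact ⟨le_refl _, elem_last m⟩
  · exact ⟨Nat.zero_le _, rfl⟩
  · exact ⟨by simp only [posOf]; omega, by simp only [posOf]; exact elem_x m i⟩
  · exact ⟨by simp only [posOf]; omega, by simp only [posOf]; exact elem_y m j hj⟩

lemma D_elem_iff (n j i : ℕ) (hj : j ≤ 2*n+6) (hi : i ≤ 2*n+6) :
    D n (elem n j) (elem n i) ↔ pLe n j i := by
  rcases pos_shape n j hj with ⟨rfl, e1⟩ | ⟨rfl, e1⟩ | ⟨a, ha, rfl, e1⟩ | ⟨a, ha, rfl, e1⟩ <;>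
    rcases pos_shape n i hi with ⟨rfl, e2⟩ | ⟨rfl, e2⟩ | ⟨b, hb, rfl, e2⟩ | ⟨b, hb, rfl, e2⟩ <;>
    simp [e1, e2, D, pLe, Igap] <;> omega

lemma FLe_elem_iff (n j i : ℕ) (hj : j ≤ 2*n+6) (hi : i ≤ 2*n+6) :
    FLe n (elem n j) (elem n i) ↔ pLe n j i :=
  (FLe_iff_D n _ _).trans (D_elem_iff n j i hj hi)

lemma card_lemma (N M : ℕ) (s : ℕ → ℕ) (Hb : ∀ k, k ≤ N → s k ≤ M)
    (Hs : ∀ q, q ≤ M → ∃ k, k ≤ N ∧ s k = q) : M ≤ N := by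
  have hsurj : Function.Surjective
      (fun k : Fin (N+1) =>
        (⟨s k.1, Nat.lt_succ_of_le (Hb k.1 (Nat.lt_succ_iff.mp k.2))⟩ : Fin (M+1))) := by
    intro q
    obtain ⟨k, hk, hv⟩ := Hs q.1 (Nat.lt_succ_iff.mp q.2)
    exact ⟨⟨k, Nat.lt_succ_of_le hk⟩, Fin.ext hv⟩
  have hcard := Fintype.card_le_of_surjective _ hsurj
  simp only [Fintype.card_fin] at hcard
  omega

/-- Two positions of `F_n` are adjacent across an incomparability gap. -/
def ADJ (n k k' : ℕ) : Prop :=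
  (k' = k+1 ∧ Igap n k) ∨ (k = k'+1 ∧ Igap n k')

lemma ADJ_symm {n u v : ℕ} (h : ADJ n u v) : ADJ n v u := by
  simp only [ADJ] at h ⊢; tauto

lemma incomp_adj (n k k' : ℕ) (hn1 : 1 ≤ n) (g1 : ¬ pLe n k' k) (g2 : ¬ pLe n k k') :
    ADJ n k k' := by
  simp [pLe, Igap, ADJ] at *
  omega

/-- Middle element of a 3-chain of mutually-forced adjacencies is unique. -/
lemma H1 (n a b c k : ℕ) (h1 : ADJ n a b) (h2 : ADJ n b c) (h3 : ADJ n a k)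
    (h4 : ADJ n k c) (h5 : k ≠ b) (h6 : a ≠ c) : False := by
  simp [ADJ] at *
  omega

/-- End element of a 3-chain of forced adjacencies is unique. -/
lemma H2 (n a b c k : ℕ) (h1 : ADJ n a b) (h2 : ADJ n b c) (h3 : ADJ n k b)
    (h5 : k ≠ a) (h6 : c ≠ k) (h7 : c ≠ a) : False := by
  simp [ADJ] at *
  omega

lemma H3 (n e g h k : ℕ) (h1 : ADJ n e g) (h2 : ADJ n e k) (h3 : ADJ n g h)
    (h4 : ADJ n k h) (h5 : k ≠ g) (h6 : e ≠ h) : False := by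
  simp [ADJ] at *
  omega

/-- A 4-chain of forced adjacencies in `F_n` (n ≥ 2) sits at positions 1,2,3,4. -/
lemma POS4 (n a b c d : ℕ) (hn2 : 2 ≤ n) (h1 : ADJ n a b) (h2 : ADJ n b c)
    (h3 : ADJ n c d) (hac : a ≠ c) (hbd : b ≠ d) :
    (a = 1 ∧ b = 2 ∧ c = 3 ∧ d = 4) ∨ (a = 4 ∧ b = 3 ∧ c = 2 ∧ d = 1) := by
  simp [ADJ, Igap] at *
  omega

/-- A 3-chain of forced adjacencies in `F_n` (n ≥ 2). -/
lemma POS3 (n e g h : ℕ) (hn2 : 2 ≤ n) (h1 : ADJ n e g) (h2 : ADJ n g h) (heh : e ≠ h) :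
    (e = 2*n+3 ∧ g = 2*n+4 ∧ h = 2*n+5) ∨ (e = 2*n+5 ∧ g = 2*n+4 ∧ h = 2*n+3) ∨
    g = 2 ∨ g = 3 := by
  simp [ADJ, Igap] at *
  omega

lemma ADJ_step {n u v : ℕ} (h : ADJ n u v) : v = u+1 ∨ u = v+1 := by
  simp only [ADJ] at h; tauto

lemma ADJ_ig_up {n u v : ℕ} (h : ADJ n u v) (he : v = u+1) : Igap n u := by
  rcases h with ⟨_, hg⟩ | ⟨hh, hg⟩
  · exact hg
  · simp only [Igap] at hg ⊢; omega

/-- No four consecutive incomparability gaps in `F_n` for `n ≥ 1`. -/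
lemma RUN4 (n g : ℕ) (hn1 : 1 ≤ n) (i1 : Igap n g) (i2 : Igap n (g+1))
    (i3 : Igap n (g+2)) (i4 : Igap n (g+3)) : False := by
  simp only [Igap] at i1 i2 i3 i4
  omega

/-- No 5 distinct positions of `F_n` (n ≥ 1) can form a path of forced adjacencies. -/
lemma FALSE5 (n a b c d e : ℕ) (hn1 : 1 ≤ n)
    (h1 : ADJ n a b) (h2 : ADJ n b c) (h3 : ADJ n c d) (h4 : ADJ n d e)
    (hac : a ≠ c) (hbd : b ≠ d) (hce : c ≠ e) (had : a ≠ d) (hbe : b ≠ e)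
    (hae : a ≠ e) : False := by
  have s1 := ADJ_step h1
  have s2 := ADJ_step h2
  have s3 := ADJ_step h3
  have s4 := ADJ_step h4
  have hord : (b = a+1 ∧ c = a+2 ∧ d = a+3 ∧ e = a+4) ∨
      (b = e+3 ∧ c = e+2 ∧ d = e+1 ∧ a = e+4) := by
    omega
  rcases hord with ⟨e1, e2, e3, e4⟩ | ⟨e1, e2, e3, e4⟩ <;>
    subst e1 <;> subst e2 <;> subst e3 <;> subst e4
  · exact RUN4 n a hn1 (ADJ_ig_up h1 rfl) (ADJ_ig_up h2 rfl)
      (ADJ_ig_up h3 rfl) (ADJ_ig_up h4 rfl)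
  · exact RUN4 n e hn1 (ADJ_ig_up (ADJ_symm h4) rfl)
      (ADJ_ig_up (ADJ_symm h3) (by omega)) (ADJ_ig_up (ADJ_symm h2) (by omega))
      (ADJ_ig_up (ADJ_symm h1) (by omega))

/-- If two distinct positions are both forced-adjacent to `v`, then `v` is one of the
three special positions. -/
lemma HV (n k k' v : ℕ) (hn2 : 2 ≤ n) (w1 : ADJ n k v) (w2 : ADJ n k' v) (hne : k ≠ k') :
    v = 2 ∨ v = 3 ∨ v = 2*n+4 := by
  simp [ADJ, Igap] at *
  omega

set_option maxHeartbeats 1000000 in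
lemma key (n m : ℕ) (hlt : m < n) (s : ℕ → ℕ)
    (Hb : ∀ k, k ≤ 2*n+6 → s k ≤ 2*m+6)
    (Hm : ∀ k k', k ≤ 2*n+6 → k' ≤ 2*n+6 → pLe n k' k → pLe m (s k') (s k))
    (Hs : ∀ q, q ≤ 2*m+6 → ∃ k, k ≤ 2*n+6 ∧ s k = q) : False := by
  have hn1 : 1 ≤ n := by omega
  have W : ∀ q k k', Igap m q → k ≤ 2*n+6 → k' ≤ 2*n+6 → s k = q → s k' = q+1 →
      ADJ n k k' := by
    intro q k k' hq hk hk' hv hv'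
    have hq' := hq
    simp only [Igap] at hq'
    have h1 : ¬ pLe m (q+1) q := by simp [pLe, Igap]; omega
    have h2 : ¬ pLe m q (q+1) := by simp [pLe, Igap]
    have g1 : ¬ pLe n k' k := by
      intro h
      have hh := Hm k k' hk hk' h
      rw [hv, hv'] at hh
      exact h1 hh
    have g2 : ¬ pLe n k k' := by
      intro h
      have hh := Hm k' k hk' hk h
      rw [hv, hv'] at hh
      exact h2 hh
    exact incomp_adj n k k' hn1 g1 g2
  by_cases hm1 : 1 ≤ m
  · -- CASE m ≥ 1 (so n ≥ 2)
    have hn2 : 2 ≤ n := by omega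
    obtain ⟨a, ha, hva⟩ := Hs 1 (by omega)
    obtain ⟨b, hb, hvb⟩ := Hs 2 (by omega)
    obtain ⟨c, hc, hvc⟩ := Hs 3 (by omega)
    obtain ⟨d, hd, hvd⟩ := Hs 4 (by omega)
    have ig1 : Igap m 1 := by simp [Igap]
    have ig2 : Igap m 2 := by simp [Igap]; try omega
    have ig3 : Igap m 3 := by simp [Igap]; try omega
    have hab := W 1 a b ig1 ha hb hva hvb
    have hbc := W 2 b c ig2 hb hc hvb hvc
    have hcd := W 3 c d ig3 hc hd hvc hvd
    have hac : a ≠ c := fun h => by rw [h] at hva; omega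
    have hbd : b ≠ d := fun h => by rw [h] at hvb; omega
    -- uniqueness of positions with values 1,2,3,4
    have U2 : ∀ k, k ≤ 2*n+6 → s k = 2 → k = b := by
      intro k hk hv
      by_contra hne
      exact H1 n a b c k hab hbc (W 1 a k ig1 ha hk hva hv) (W 2 k c ig2 hk hc hv hvc)
        hne hac
    have U3 : ∀ k, k ≤ 2*n+6 → s k = 3 → k = c := by
      intro k hk hv
      by_contra hne
      exact H1 n b c d k hbc hcd (W 2 b k ig2 hb hk hvb hv) (W 3 k d ig3 hk hd hv hvd)
        hne hbd
    have U1 : ∀ k, k ≤ 2*n+6 → s k = 1 → k = a := by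
      intro k hk hv
      by_contra hne
      have hck : c ≠ k := fun h => by rw [h] at hvc; omega
      exact H2 n a b c k hab hbc (W 1 k b ig1 hk hb hv hvb) hne hck (Ne.symm hac)
    have U4 : ∀ k, k ≤ 2*n+6 → s k = 4 → k = d := by
      intro k hk hv
      by_contra hne
      have hbk : b ≠ k := fun h => by rw [h] at hvb; omega
      exact H2 n d c b k (ADJ_symm hcd) (ADJ_symm hbc) (ADJ_symm (W 3 c k ig3 hc hk hvc hv))
        hne hbk hbd
    -- pin down the positions of values 1,2,3,4
    have hgood : a = 1 ∧ b = 2 ∧ c = 3 ∧ d = 4 := by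
      rcases POS4 n a b c d hn2 hab hbc hcd hac hbd with h | ⟨h1, h2, h3, h4⟩
      · exact h
      · exfalso
        subst h1; subst h2; subst h3; subst h4
        have hp : pLe n 3 1 := by simp [pLe, Igap]
        have hcmp := Hm 1 3 (by omega) (by omega) hp
        rw [hvb, hvd] at hcmp
        simp [pLe, Igap] at hcmp
    obtain ⟨h1, h2, h3, h4⟩ := hgood
    subst h1; subst h2; subst h3; subst h4
    -- now hva : s 1 = 1, hvb : s 2 = 2, hvc : s 3 = 3, hvd : s 4 = 4
    -- the bottom chain of F_m: values 2m+3, 2m+4, 2m+5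
    obtain ⟨e, he, hve⟩ := Hs (2*m+3) (by omega)
    obtain ⟨g, hg, hvg⟩ := Hs (2*m+4) (by omega)
    obtain ⟨h2, hh, hvh⟩ := Hs (2*m+5) (by omega)
    have ig4 : Igap m (2*m+3) := by simp [Igap]; try omega
    have ig5 : Igap m (2*m+4) := by simp [Igap]; try omega
    have heg := W (2*m+3) e g ig4 he hg hve hvg
    have hgh := W (2*m+4) g h2 ig5 hg hh hvg hvh
    have heh : e ≠ h2 := fun h => by rw [h] at hve; omega
    have UG : ∀ k, k ≤ 2*n+6 → s k = 2*m+4 → k = g := by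
      intro k hk hv
      by_contra hne
      exact H3 n e g h2 k heg (W (2*m+3) e k ig4 he hk hve hv) hgh
        (W (2*m+4) k h2 ig5 hk hh hv hvh) hne heh
    have UE : ∀ k, k ≤ 2*n+6 → s k = 2*m+3 → k = e := by
      intro k hk hv
      by_contra hne
      have hhk : h2 ≠ k := fun h => by rw [h] at hvh; omega
      exact H2 n e g h2 k heg hgh (W (2*m+3) k g ig4 hk hg hv hvg) hne hhk (Ne.symm heh)
    have UH : ∀ k, k ≤ 2*n+6 → s k = 2*m+5 → k = h2 := by
      intro k hk hv
      by_contra hne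
      have hek : e ≠ k := fun h => by rw [h] at hve; omega
      exact H2 n h2 g e k (ADJ_symm hgh) (ADJ_symm heg) (ADJ_symm (W (2*m+4) g k ig5 hg hk hvg hv))
        hne hek heh
    have ng2 : g ≠ 2 := fun h => by rw [h] at hvg; omega
    have ng3 : g ≠ 3 := fun h => by rw [h] at hvg; omega
    have hgood2 : e = 2*n+3 ∧ g = 2*n+4 ∧ h2 = 2*n+5 := by
      rcases POS3 n e g h2 hn2 heg hgh heh with h | ⟨h1, h2', h3⟩ | h | h
      · exact h
      · exfalso
        subst h1; subst h2'; subst h3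
        have hp : pLe n (2*n+5) (2*n+3) := by simp [pLe, Igap]; try omega
        have hcmp := Hm (2*n+3) (2*n+5) (by omega) (by omega) hp
        rw [hve, hvh] at hcmp
        simp [pLe, Igap] at hcmp <;> omega
      · exact absurd h ng2
      · exact absurd h ng3
    obtain ⟨h1, h2', h3⟩ := hgood2
    subst h1; subst h2'; subst h3
    -- middle positions carry middle values
    have MID : ∀ k, 5 ≤ k → k ≤ 2*n+2 → 5 ≤ s k ∧ s k ≤ 2*m+2 := by
      intro k h5 h22
      have hk : k ≤ 2*n+6 := by omega
      constructor
      · have hp : pLe n k 4 := by simp [pLe, Igap]; try omega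
        have t1 := Hm 4 k (by omega) hk hp
        rw [hvd] at t1
        have hk4 : s k ≠ 4 := fun hv => by have := U4 k hk hv; omega
        simp [pLe, Igap] at t1
        omega
      · have hp : pLe n (2*n+3) k := by simp [pLe, Igap]; try omega
        have t2 := Hm k (2*n+3) hk (by omega) hp
        rw [hve] at t2
        have hke : s k ≠ 2*m+3 := fun hv => by have := UE k hk hv; omega
        simp [pLe, Igap] at t2
        omega
    -- middle values have unique positions
    have UMID : ∀ q k k', 5 ≤ q → q ≤ 2*m+2 → k ≤ 2*n+6 → k' ≤ 2*n+6 →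
        s k = q → s k' = q → k = k' := by
      intro q k k' h5 h2m hk hk' hv hv'
      by_contra hne
      by_cases hpar : q % 2 = 1
      · -- q odd: pair with q+1
        have igq : Igap m q := by simp [Igap]; try omega
        obtain ⟨v, hvB, hvv⟩ := Hs (q+1) (by omega)
        have w1 := W q k v igq hk hvB hv hvv
        have w2 := W q k' v igq hk' hvB hv' hvv
        have nv2 : v ≠ 2 := fun h => by rw [h] at hvv; omega
        have nv3 : v ≠ 3 := fun h => by rw [h] at hvv; omega
        have nv4 : v ≠ 2*n+4 := fun h => by rw [h] at hvv; omega
        rcases HV n k k' v hn2 w1 w2 hne with h | h | h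
        · exact nv2 h
        · exact nv3 h
        · exact nv4 h
      · -- q even: pair with q-1
        have igq : Igap m (q-1) := by simp [Igap]; try omega
        obtain ⟨u, huB, hvu⟩ := Hs (q-1) (by omega)
        have w1 := W (q-1) u k igq huB hk hvu (by omega)
        have w2 := W (q-1) u k' igq huB hk' hvu (by omega)
        have nu2 : u ≠ 2 := fun h => by rw [h] at hvu; omega
        have nu3 : u ≠ 3 := fun h => by rw [h] at hvu; omega
        have nu4 : u ≠ 2*n+4 := fun h => by rw [h] at hvu; omega
        rcases HV n k k' u hn2 (ADJ_symm w1) (ADJ_symm w2) hne with h | h | h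
        · exact nu2 h
        · exact nu3 h
        · exact nu4 h
    -- pigeonhole on the middle
    have hmaps : ∀ k ∈ Finset.Icc 5 (2*n+2), s k ∈ Finset.Icc 5 (2*m+2) := by
      intro k hk
      simp only [Finset.mem_Icc] at hk ⊢
      exact MID k hk.1 hk.2
    have hinj : Set.InjOn s (Finset.Icc 5 (2*n+2) : Finset ℕ) := by
      intro k hk k' hk' hv
      simp only [Finset.coe_Icc, Set.mem_Icc] at hk hk'
      have h1 := MID k hk.1 hk.2
      exact UMID (s k) k k' h1.1 h1.2 (by omega) (by omega) rfl hv.symm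
    have hcard := Finset.card_le_card_of_injOn s hmaps hinj
    simp only [Nat.card_Icc] at hcard
    omega
  · -- CASE m = 0 (so n ≥ 1)
    have hm0 : m = 0 := by omega
    subst hm0
    obtain ⟨a, ha, hva⟩ := Hs 1 (by omega)
    obtain ⟨b, hb, hvb⟩ := Hs 2 (by omega)
    obtain ⟨c, hc, hvc⟩ := Hs 3 (by omega)
    obtain ⟨d, hd, hvd⟩ := Hs 4 (by omega)
    obtain ⟨e, he, hve⟩ := Hs 5 (by omega)
    have ig1 : Igap 0 1 := by simp [Igap]
    have ig2 : Igap 0 2 := by simp [Igap]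
    have ig3 : Igap 0 3 := by simp [Igap]
    have ig4 : Igap 0 4 := by simp [Igap]
    have hab := W 1 a b ig1 ha hb hva hvb
    have hbc := W 2 b c ig2 hb hc hvb hvc
    have hcd := W 3 c d ig3 hc hd hvc hvd
    have hde := W 4 d e ig4 hd he hvd hve
    have hbd : b ≠ d := fun h => by rw [h] at hvb; omega
    have hac : a ≠ c := fun h => by rw [h] at hva; omega
    have hce : c ≠ e := fun h => by rw [h] at hvc; omega
    have had : a ≠ d := fun h => by rw [h] at hva; omega
    have hbe : b ≠ e := fun h => by rw [h] at hvb; omega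
    have hae : a ≠ e := fun h => by rw [h] at hva; omega
    exact FALSE5 n a b c d e hn1 hab hbc hcd hde hac hbd hce had hbe hae

set_option maxHeartbeats 1000000 in
/-- For `n ≠ m` there is no surjective order-preserving map from `F_n` onto `F_m`;
hence the family `{F_n}` is an antichain with respect to
"is an order-preserving image of". -/
theorem stmt0 (n m : ℕ) (hnm : n ≠ m) :
    ¬ ∃ f : FCarrier n → FCarrier m,
        Function.Surjective f ∧
        (∀ a b : FCarrier n, FLe n a.1 b.1 → FLe m (f a).1 (f b).1) := by
  rintro ⟨f, hsurj, hmono⟩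
  obtain ⟨s, Hb, Hm, Hs⟩ :
      ∃ s : ℕ → ℕ,
        (∀ k, k ≤ 2*n+6 → s k ≤ 2*m+6) ∧
        (∀ k k', k ≤ 2*n+6 → k' ≤ 2*n+6 → pLe n k' k → pLe m (s k') (s k)) ∧
        (∀ q, q ≤ 2*m+6 → ∃ k, k ≤ 2*n+6 ∧ s k = q) := by
    refine ⟨fun k => if h : k ≤ 2*n+6 then posOf m (f ⟨elem n k, elem_mem n k h⟩).1 else 0,
      ?_, ?_, ?_⟩
    · intro k hk
      simp only [dif_pos hk]
      exact (posOf_mem m _ (f _).2).1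
    · intro k k' hk hk' hp
      simp only [dif_pos hk, dif_pos hk']
      have hle : FLe n (elem n k') (elem n k) := (FLe_elem_iff n k' k hk' hk).mpr hp
      have hfle := hmono ⟨elem n k', elem_mem n k' hk'⟩ ⟨elem n k, elem_mem n k hk⟩ hle
      set A := (f ⟨elem n k', elem_mem n k' hk'⟩).1 with hA
      set B := (f ⟨elem n k, elem_mem n k hk⟩).1 with hB
      obtain ⟨hA1, hA2⟩ := posOf_mem m A (f _).2
      obtain ⟨hB1, hB2⟩ := posOf_mem m B (f _).2
      refine (FLe_elem_iff m (posOf m A) (posOf m B) hA1 hB1).mp ?_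
      rw [hA2, hB2]
      exact hfle
    · intro q hq
      obtain ⟨p, hp⟩ := hsurj ⟨elem m q, elem_mem m q hq⟩
      obtain ⟨k, hk, he⟩ := carrier_shape n p.1 p.2
      refine ⟨k, hk, ?_⟩
      simp only [dif_pos hk]
      have hpe : (⟨elem n k, elem_mem n k hk⟩ : FCarrier n) = p := Subtype.ext he
      rw [hpe, hp]
      exact posOf_elem m q hq
  rcases Nat.lt_or_ge n m with hlt | hge
  · have := card_lemma (2*n+6) (2*m+6) s Hb Hs
    omega
  · have hlt : m < n := by omega
    exact key n m hlt s Hb Hm Hs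
end

section
/- Let (W, ≤) be a partially ordered set and let N be a function mapping upward-closed subsets of W to upward-closed subsets of W. Then the following are equivalent: (i) N(X) ∩ Y = N(X ∩ Y) ∩ Y for all upward-closed subsets X, Y ⊆ W; (ii) for every w ∈ W and every upward-closed X ⊆ W, w ∈ N(X) if and only if w ∈ N(X ∩ R(w)). -/
def IsUpset {W : Type*} (le : W → W → Prop) (X : Set W) : Prop :=
  ∀ ⦃w v : W⦄, le w v → w ∈ X → v ∈ X

/-- The locality condition `N(X) ∩ Y = N(X ∩ Y) ∩ Y` (for upsets) is equivalent to
`w ∈ N(X) ↔ w ∈ N(X ∩ R(w))` for every point `w` and upset `X`. -/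
theorem stmt2 {W : Type*} [PartialOrder W] (N : Set W → Set W)
    (hN : ∀ X : Set W, IsUpset (· ≤ ·) X → IsUpset (· ≤ ·) (N X)) :
    (∀ X Y : Set W, IsUpset (· ≤ ·) X → IsUpset (· ≤ ·) Y →
        N X ∩ Y = N (X ∩ Y) ∩ Y) ↔
    (∀ (w : W) (X : Set W), IsUpset (· ≤ ·) X →
        (w ∈ N X ↔ w ∈ N (X ∩ Set.Ici w))) := by
  have hIci : ∀ w : W, IsUpset (· ≤ ·) (Set.Ici w) :=
    fun w a b hab ha => le_trans ha hab
  have hInter : ∀ X Y : Set W, IsUpset (· ≤ ·) X → IsUpset (· ≤ ·) Y →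
      IsUpset (· ≤ ·) (X ∩ Y) :=
    fun X Y hX hY a b hab ⟨haX, haY⟩ => ⟨hX hab haX, hY hab haY⟩
  constructor
  · intro h w X hX
    have := h X (Set.Ici w) hX (hIci w)
    constructor
    · intro hw
      have : w ∈ N (X ∩ Set.Ici w) ∩ Set.Ici w := this ▸ ⟨hw, le_refl w⟩
      exact this.1
    · intro hw
      have : w ∈ N X ∩ Set.Ici w := this.symm ▸ ⟨hw, le_refl w⟩
      exact this.1
  · intro h X Y hX hY
    ext v
    constructor
    · rintro ⟨hvN, hvY⟩
      refine ⟨?_, hvY⟩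
      have h1 := (h v X hX).1 hvN
      have heq : X ∩ Set.Ici v = (X ∩ Y) ∩ Set.Ici v := by
        ext u
        constructor
        · rintro ⟨hu, hle⟩; exact ⟨⟨hu, hY hle hvY⟩, hle⟩
        · rintro ⟨⟨hu, _⟩, hle⟩; exact ⟨hu, hle⟩
      exact (h v (X ∩ Y) (hInter X Y hX hY)).2 (by rwa [heq] at h1)
    · rintro ⟨hvN, hvY⟩
      refine ⟨?_, hvY⟩
      have h1 := (h v (X ∩ Y) (hInter X Y hX hY)).1 hvN
      have heq : X ∩ Set.Ici v = (X ∩ Y) ∩ Set.Ici v := by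
        ext u
        constructor
        · rintro ⟨hu, hle⟩; exact ⟨⟨hu, hY hle hvY⟩, hle⟩
        · rintro ⟨⟨hu, _⟩, hle⟩; exact ⟨hu, hle⟩
      exact (h v X hX).2 (by rwa [← heq] at h1)
end

section
/- Let (W, ≤) be a partially ordered set. (i) If N is a function from upsets of W to upsets of W satisfying N(X) ∩ Y = N(X ∩ Y) ∩ Y for all upsets X, Y, then the function 𝔫 defined by 𝔫(w) = {X an upset of W : w ∈ N(X)} is monotone (w ≤ v implies 𝔫(w) ⊆ 𝔫(v)) and satisfies: X ∈ 𝔫(w) if and only if X ∩ R(w) ∈ 𝔫(w), for every upset X and every w ∈ W. (ii) Conversely, if 𝔫 assigns to each w ∈ W a collection of upsets of W, is monotone, and satisfies X ∈ 𝔫(w) iff X ∩ R(w) ∈ 𝔫(w) for every upset X, then N defined by N(X) = {w ∈ W : X ∈ 𝔫(w)} maps upsets to upsets and satisfies N(X) ∩ Y = N(X ∩ Y) ∩ Y for all upsets X, Y. (iii) The two constructions are mutually inverse. -/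
/-- The neighbourhood function associated to `N`. -/
def toNbhd {W : Type*} [PartialOrder W] (N : Set W → Set W) : W → Set (Set W) :=
  fun w => {X | IsUpset (· ≤ ·) X ∧ w ∈ N X}

/-- The N-function associated to a neighbourhood function. -/
def toN {W : Type*} (n : W → Set (Set W)) : Set W → Set W :=
  fun X => {w | X ∈ n w}

/-- Correspondence between N-functions on upsets satisfying locality and monotone
neighbourhood functions on upsets satisfying `X ∈ 𝔫(w) ↔ X ∩ R(w) ∈ 𝔫(w)`;
the two constructions are mutually inverse. -/
theorem stmt3 {W : Type*} [PartialOrder W] :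
    (∀ N : Set W → Set W,
      (∀ X, IsUpset (· ≤ ·) X → IsUpset (· ≤ ·) (N X)) →
      (∀ X Y : Set W, IsUpset (· ≤ ·) X → IsUpset (· ≤ ·) Y →
          N X ∩ Y = N (X ∩ Y) ∩ Y) →
      ((∀ w v : W, w ≤ v → toNbhd N w ⊆ toNbhd N v) ∧
       (∀ (w : W) (X : Set W), IsUpset (· ≤ ·) X →
          (X ∈ toNbhd N w ↔ X ∩ Set.Ici w ∈ toNbhd N w)))) ∧
    (∀ n : W → Set (Set W),
      (∀ (w : W) (X : Set W), X ∈ n w → IsUpset (· ≤ ·) X) →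
      (∀ w v : W, w ≤ v → n w ⊆ n v) →
      (∀ (w : W) (X : Set W), IsUpset (· ≤ ·) X → (X ∈ n w ↔ X ∩ Set.Ici w ∈ n w)) →
      ((∀ X, IsUpset (· ≤ ·) X → IsUpset (· ≤ ·) (toN n X)) ∧
       (∀ X Y : Set W, IsUpset (· ≤ ·) X → IsUpset (· ≤ ·) Y →
          toN n X ∩ Y = toN n (X ∩ Y) ∩ Y))) ∧
    (∀ N : Set W → Set W,
      (∀ X, IsUpset (· ≤ ·) X → IsUpset (· ≤ ·) (N X)) →
      (∀ X Y : Set W, IsUpset (· ≤ ·) X → IsUpset (· ≤ ·) Y →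
          N X ∩ Y = N (X ∩ Y) ∩ Y) →
      ∀ X, IsUpset (· ≤ ·) X → toN (toNbhd N) X = N X) ∧
    (∀ n : W → Set (Set W),
      (∀ (w : W) (X : Set W), X ∈ n w → IsUpset (· ≤ ·) X) →
      (∀ w v : W, w ≤ v → n w ⊆ n v) →
      (∀ (w : W) (X : Set W), IsUpset (· ≤ ·) X → (X ∈ n w ↔ X ∩ Set.Ici w ∈ n w)) →
      ∀ w, toNbhd (toN n) w = n w) := by
  refine ⟨?_, ?_, ?_, ?_⟩
  · intro N hup hloc
    constructor
    · intro w v hwv X hX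
      exact ⟨hX.1, hup X hX.1 hwv hX.2⟩
    · intro w X hX
      have hIci : IsUpset (· ≤ ·) (Set.Ici w) := fun a b hab ha => le_trans ha hab
      have key := hloc X (Set.Ici w) hX hIci
      have hw : w ∈ Set.Ici w := le_refl w
      constructor
      · intro ⟨_, hwN⟩
        refine ⟨fun a b hab ⟨ha1, ha2⟩ => ⟨hX hab ha1, le_trans ha2 hab⟩, ?_⟩
        have : w ∈ N X ∩ Set.Ici w := ⟨hwN, hw⟩
        rw [key] at this
        exact this.1
      · intro ⟨_, hwN⟩
        refine ⟨hX, ?_⟩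
        have : w ∈ N (X ∩ Set.Ici w) ∩ Set.Ici w := ⟨hwN, hw⟩
        rw [← key] at this
        exact this.1
  · intro n hup hmono hloc
    constructor
    · intro X _ a b hab ha
      exact hmono a b hab ha
    · intro X Y hX hY
      ext w
      simp only [Set.mem_inter_iff, toN, Set.mem_setOf_eq]
      constructor
      · rintro ⟨hXn, hwY⟩
        refine ⟨?_, hwY⟩
        have hIci : Set.Ici w ⊆ Y := fun v hv => hY hv hwY
        have h1 : X ∩ Set.Ici w ∈ n w := (hloc w X hX).mp hXn
        have heq : X ∩ Set.Ici w = (X ∩ Y) ∩ Set.Ici w := by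
          ext v; simp only [Set.mem_inter_iff]
          exact ⟨fun ⟨h1, h2⟩ => ⟨⟨h1, hIci h2⟩, h2⟩, fun ⟨⟨h1, _⟩, h2⟩ => ⟨h1, h2⟩⟩
        rw [heq] at h1
        exact (hloc w (X ∩ Y) (fun a b hab ⟨h1, h2⟩ => ⟨hX hab h1, hY hab h2⟩)).mpr h1
      · rintro ⟨hXYn, hwY⟩
        refine ⟨?_, hwY⟩
        have hIci : Set.Ici w ⊆ Y := fun v hv => hY hv hwY
        have h1 : (X ∩ Y) ∩ Set.Ici w ∈ n w :=
          (hloc w (X ∩ Y) (fun a b hab ⟨h1, h2⟩ => ⟨hX hab h1, hY hab h2⟩)).mp hXYn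
        have heq : X ∩ Set.Ici w = (X ∩ Y) ∩ Set.Ici w := by
          ext v; simp only [Set.mem_inter_iff]
          exact ⟨fun ⟨h1, h2⟩ => ⟨⟨h1, hIci h2⟩, h2⟩, fun ⟨⟨h1, _⟩, h2⟩ => ⟨h1, h2⟩⟩
        rw [← heq] at h1
        exact (hloc w X hX).mpr h1
  · intro N _ _ X hX
    ext w
    simp only [toN, toNbhd, Set.mem_setOf_eq]
    exact ⟨fun h => h.2, fun h => ⟨hX, h⟩⟩
  · intro n hup _ _ w
    ext X
    simp only [toNbhd, toN, Set.mem_setOf_eq]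
    exact ⟨fun h => h.2, fun h => ⟨hup w X h, h⟩⟩
end

section
/- Let F = (W, ≤, N) be an N-frame and let p, q be distinct propositional variables. Then F ⊨ (p ∧ ¬p) → ¬q if and only if X ∩ N(X) ⊆ N(Y) for all upward-closed subsets X, Y of W. -/
inductive Form : Type
  | var : ℕ → Form
  | top : Form
  | and : Form → Form → Form
  | or : Form → Form → Form
  | imp : Form → Form → Form
  | neg : Form → Form

def Sat {W : Type*} (le : W → W → Prop) (N : Set W → Set W) (V : ℕ → Set W) : Form → Set W
  | .var p => V p
  | .top => Set.univ
  | .and φ ψ => Sat le N V φ ∩ Sat le N V ψ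
  | .or φ ψ => Sat le N V φ ∪ Sat le N V ψ
  | .imp φ ψ => {w | ∀ v, le w v → v ∈ Sat le N V φ → v ∈ Sat le N V ψ}
  | .neg φ => N (Sat le N V φ)

def ValidOn {W : Type*} (le : W → W → Prop) (N : Set W → Set W) (φ : Form) : Prop :=
  ∀ V : ℕ → Set W, (∀ p, IsUpset le (V p)) → ∀ w, w ∈ Sat le N V φ

/-- `F ⊨ (p ∧ ¬p) → ¬q` iff `X ∩ N(X) ⊆ N(Y)` for all upsets `X, Y`. -/
theorem stmt4 {W : Type*} (le : W → W → Prop)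
    (hrefl : ∀ w, le w w)
    (htrans : ∀ a b c, le a b → le b c → le a c)
    (hanti : ∀ a b, le a b → le b a → a = b)
    (N : Set W → Set W)
    (hNup : ∀ X, IsUpset le X → IsUpset le (N X))
    (hNloc : ∀ X Y, IsUpset le X → IsUpset le Y → N X ∩ Y = N (X ∩ Y) ∩ Y)
    (p q : ℕ) (hpq : p ≠ q) :
    ValidOn le N (((Form.var p).and ((Form.var p).neg)).imp ((Form.var q).neg)) ↔
      ∀ X Y : Set W, IsUpset le X → IsUpset le Y → X ∩ N X ⊆ N Y := by
  constructor
  · intro h X Y hX hY w hw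
    have hV : ∀ n, IsUpset le ((fun n => if n = p then X else Y) n) := by
      intro n; dsimp only; split <;> assumption
    have := h (fun n => if n = p then X else Y) hV w w (hrefl w)
    simp only [Sat, if_pos rfl, if_neg (Ne.symm hpq)] at this
    exact this hw
  · intro h V hV w
    intro v _ hv
    exact h (V p) (V q) (hV p) (hV q) hv
end

section
/- Let F = (W, ≤, N) be an N-frame and let p, q be distinct propositional variables. Then F ⊨ (p → q) → (¬q → ¬p) if and only if N is antitone on upsets, i.e., for all upward-closed X, Y ⊆ W, X ⊆ Y implies N(Y) ⊆ N(X). -/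
/-- `F ⊨ (p → q) → (¬q → ¬p)` iff `N` is antitone on upsets. -/
theorem stmt5 {W : Type*} (le : W → W → Prop)
    (hrefl : ∀ w, le w w)
    (htrans : ∀ a b c, le a b → le b c → le a c)
    (hanti : ∀ a b, le a b → le b a → a = b)
    (N : Set W → Set W)
    (hNup : ∀ X, IsUpset le X → IsUpset le (N X))
    (hNloc : ∀ X Y, IsUpset le X → IsUpset le Y → N X ∩ Y = N (X ∩ Y) ∩ Y)
    (p q : ℕ) (hpq : p ≠ q) :
    ValidOn le N (((Form.var p).imp (Form.var q)).imp
        (((Form.var q).neg).imp ((Form.var p).neg))) ↔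
      ∀ X Y : Set W, IsUpset le X → IsUpset le Y → X ⊆ Y → N Y ⊆ N X := by
  constructor
  · intro hval X Y hX hY hXY w hw
    set V : ℕ → Set W := fun n => if n = p then X else if n = q then Y else Set.univ with hV
    have hVup : ∀ n, IsUpset le (V n) := by
      intro n
      simp only [hV]
      split
      · exact hX
      · split
        · exact hY
        · intro a b _ _; trivial
    have hVp : V p = X := by simp [hV]
    have hVq : V q = Y := by simp [hV, hpq.symm]
    have h := hval V hVup w w (hrefl w) ?_ w (hrefl w) ?_
    · simpa [Sat, hVp] using h
    · intro v _ hvp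
      simp only [Sat, hVp] at hvp
      simp only [Sat, hVq]
      exact hXY hvp
    · simpa [Sat, hVq] using hw
  · intro hmono V hVup w v hwv himp u hvu hu
    simp only [Sat] at himp hu ⊢
    set U : Set W := {x | le u x} with hU
    have hUup : IsUpset le U := fun a b hab ha => htrans u a b ha hab
    have hsub : Sat le N V (.var p) ∩ U ⊆ Sat le N V (.var q) ∩ U := by
      rintro x ⟨hxp, hxU⟩
      exact ⟨himp x (htrans v u x hvu hxU) hxp, hxU⟩
    have hPup : IsUpset le (Sat le N V (.var p)) := hVup p
    have hQup : IsUpset le (Sat le N V (.var q)) := hVup q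
    have h1 : u ∈ N (Sat le N V (.var q)) ∩ U := ⟨hu, hrefl u⟩
    rw [hNloc _ _ hQup hUup] at h1
    have h2 : u ∈ N (Sat le N V (.var p) ∩ U) ∩ U :=
      ⟨hmono (Sat le N V (.var p) ∩ U) (Sat le N V (.var q) ∩ U) (fun a b hab h => ⟨hPup hab h.1, hUup hab h.2⟩)
        (fun a b hab h => ⟨hQup hab h.1, hUup hab h.2⟩) hsub h1.1, hrefl u⟩
    rw [← hNloc _ _ hPup hUup] at h2
    exact h2.1
end

section
/- Filtration Theorem: Let M = (W, ≤, N, V) be an N-model and let M* = (W*, ≤*, N*, V*) be a filtration of M through a finite set Σ of formulas closed under subformulas. Then for each φ ∈ Σ and each w ∈ W: M, w ⊨ φ if and only if M*, [w] ⊨ φ. -/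
def SubClosed (S : Set Form) : Prop :=
  (∀ φ ψ : Form, φ.and ψ ∈ S → φ ∈ S ∧ ψ ∈ S) ∧
  (∀ φ ψ : Form, φ.or ψ ∈ S → φ ∈ S ∧ ψ ∈ S) ∧
  (∀ φ ψ : Form, φ.imp ψ ∈ S → φ ∈ S ∧ ψ ∈ S) ∧
  (∀ φ : Form, φ.neg ∈ S → φ ∈ S)

structure IsNFiltration {W Wstar : Type*} (le : W → W → Prop) (N : Set W → Set W)
    (V : ℕ → Set W) (S : Set Form) (π : W → Wstar)
    (les : Wstar → Wstar → Prop) (Ns : Set Wstar → Set Wstar) (Vs : ℕ → Set Wstar) : Prop where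
  refl : ∀ a, les a a
  trans : ∀ a b c, les a b → les b c → les a c
  antisymm : ∀ a b, les a b → les b a → a = b
  nup : ∀ X, IsUpset les X → IsUpset les (Ns X)
  nloc : ∀ X Y, IsUpset les X → IsUpset les Y → Ns X ∩ Y = Ns (X ∩ Y) ∩ Y
  vup : ∀ p, IsUpset les (Vs p)
  vdef : ∀ p, Form.var p ∈ S → Vs p = π '' (V p)
  monoPi : ∀ w v, le w v → les (π w) (π v)
  back : ∀ φ ∈ S, ∀ w v, les (π w) (π v) → w ∈ Sat le N V φ → v ∈ Sat le N V φ
  nc : ∀ X, IsUpset les X → ∀ w, π w ∈ Ns X → w ∈ N (π ⁻¹' X)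
  nd : ∀ ψ : Form, ψ.neg ∈ S → ∀ w, w ∈ N (Sat le N V ψ) → π w ∈ Ns (π '' (Sat le N V ψ))


lemma sat_upset {W : Type*} (le : W → W → Prop)
    (htrans : ∀ a b c, le a b → le b c → le a c)
    (N : Set W → Set W) (hNup : ∀ X, IsUpset le X → IsUpset le (N X))
    (V : ℕ → Set W) (hV : ∀ p, IsUpset le (V p)) :
    ∀ φ : Form, IsUpset le (Sat le N V φ) := by
  intro φ
  induction φ with
  | var p => exact hV p
  | top => intro w v _ _; trivial
  | and φ ψ ihφ ihψ => intro w v h hw; exact ⟨ihφ h hw.1, ihψ h hw.2⟩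
  | or φ ψ ihφ ihψ =>
      intro w v h hw
      rcases hw with hw | hw
      · exact Or.inl (ihφ h hw)
      · exact Or.inr (ihψ h hw)
  | imp φ ψ ihφ ihψ =>
      intro w v h hw u hu hfu
      exact hw u (htrans _ _ _ h hu) hfu
  | neg φ ih => exact hNup _ ih

/-- Filtration Theorem: truth of formulas in `Σ` is preserved and reflected
by any filtration. -/
theorem stmt8 {W Wstar : Type*}
    (le : W → W → Prop)
    (hrefl : ∀ w, le w w)
    (htrans : ∀ a b c, le a b → le b c → le a c)
    (hanti : ∀ a b, le a b → le b a → a = b)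
    (N : Set W → Set W)
    (hNup : ∀ X, IsUpset le X → IsUpset le (N X))
    (hNloc : ∀ X Y, IsUpset le X → IsUpset le Y → N X ∩ Y = N (X ∩ Y) ∩ Y)
    (V : ℕ → Set W) (hV : ∀ p, IsUpset le (V p))
    (S : Set Form) (hSfin : S.Finite) (hSsub : SubClosed S)
    (π : W → Wstar) (hπsurj : Function.Surjective π)
    (hπ : ∀ w v : W, π w = π v ↔ ∀ φ ∈ S, (w ∈ Sat le N V φ ↔ v ∈ Sat le N V φ))
    (les : Wstar → Wstar → Prop) (Ns : Set Wstar → Set Wstar) (Vs : ℕ → Set Wstar)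
    (hfil : IsNFiltration le N V S π les Ns Vs) :
    ∀ φ ∈ S, ∀ w : W, w ∈ Sat le N V φ ↔ π w ∈ Sat les Ns Vs φ := by
  intro φ
  induction φ with
  | var p =>
      intro hp w
      simp only [Sat]
      rw [hfil.vdef p hp]
      constructor
      · exact fun hw => ⟨w, hw, rfl⟩
      · rintro ⟨v, hv, hvw⟩
        exact ((hπ v w).1 hvw _ hp).1 hv
  | top => intro _ w; simp [Sat]
  | and φ ψ ihφ ihψ =>
      intro h w
      obtain ⟨h1, h2⟩ := hSsub.1 _ _ h
      exact and_congr (ihφ h1 w) (ihψ h2 w)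
  | or φ ψ ihφ ihψ =>
      intro h w
      obtain ⟨h1, h2⟩ := hSsub.2.1 _ _ h
      exact or_congr (ihφ h1 w) (ihψ h2 w)
  | imp φ ψ ihφ ihψ =>
      intro h w
      obtain ⟨h1, h2⟩ := hSsub.2.2.1 _ _ h
      constructor
      · intro hw x hx hfx
        obtain ⟨v, rfl⟩ := hπsurj x
        have hv : v ∈ Sat le N V (φ.imp ψ) := hfil.back _ h w v hx hw
        have hfv : v ∈ Sat le N V φ := (ihφ h1 v).2 hfx
        exact (ihψ h2 v).1 (hv v (hrefl v) hfv)
      · intro hw v hv hfv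
        exact (ihψ h2 v).2 (hw (π v) (hfil.monoPi w v hv) ((ihφ h1 v).1 hfv))
  | neg φ ih =>
      intro h w
      have h1 := hSsub.2.2.2 _ h
      have hup : IsUpset les (Sat les Ns Vs φ) :=
        sat_upset les hfil.trans Ns hfil.nup Vs hfil.vup φ
      have himg : Sat les Ns Vs φ = π '' (Sat le N V φ) := by
        ext x
        constructor
        · intro hx
          obtain ⟨v, rfl⟩ := hπsurj x
          exact ⟨v, (ih h1 v).2 hx, rfl⟩
        · rintro ⟨v, hv, rfl⟩
          exact (ih h1 v).1 hv
      constructor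
      · intro hw
        have := hfil.nd φ h w hw
        rwa [← himg] at this
      · intro hw
        have := hfil.nc _ hup w hw
        have hpre : π ⁻¹' (Sat les Ns Vs φ) = Sat le N V φ := by
          ext v; exact (ih h1 v).symm
        rwa [hpre] at this
end

section
/- Soundness and completeness of NS4: For every formula φ of the bi-modal language L□, NS4 ⊢ φ if and only if φ is valid on every N-frame for NS4. -/
inductive MForm : Type
  | var : ℕ → MForm
  | bot : MForm
  | top : MForm
  | and : MForm → MForm → MForm
  | or : MForm → MForm → MForm
  | imp : MForm → MForm → MForm
  | box : MForm → MForm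
  | bbox : MForm → MForm

def MForm.miff (φ ψ : MForm) : MForm := (φ.imp ψ).and (ψ.imp φ)

def MTaut (φ : MForm) : Prop :=
  ∀ v : MForm → Bool,
    v MForm.bot = false → v MForm.top = true →
    (∀ a b : MForm, v (a.and b) = (v a && v b)) →
    (∀ a b : MForm, v (a.or b) = (v a || v b)) →
    (∀ a b : MForm, v (a.imp b) = (!(v a) || v b)) →
    v φ = true

inductive NS4 : MForm → Prop
  | taut : ∀ {φ : MForm}, MTaut φ → NS4 φ
  | axK : ∀ φ ψ : MForm, NS4 (((φ.imp ψ).box).imp ((φ.box).imp (ψ.box)))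
  | axT : ∀ φ : MForm, NS4 ((φ.box).imp φ)
  | ax4 : ∀ φ : MForm, NS4 ((φ.box).imp (φ.box.box))
  | axN : ∀ φ ψ : MForm, NS4 (((φ.miff ψ).box).imp ((φ.bbox).miff (ψ.bbox)))
  | axB : ∀ φ : MForm, NS4 ((φ.bbox).imp (φ.bbox.box))
  | mp : ∀ {φ ψ : MForm}, NS4 (φ.imp ψ) → NS4 φ → NS4 ψ
  | nec : ∀ {φ : MForm}, NS4 φ → NS4 (φ.box)

def MSat {W : Type*} (le : W → W → Prop) (N : Set W → Set W) (V : ℕ → Set W) : MForm → Set W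
  | .var p => V p
  | .bot => ∅
  | .top => Set.univ
  | .and φ ψ => MSat le N V φ ∩ MSat le N V ψ
  | .or φ ψ => MSat le N V φ ∪ MSat le N V ψ
  | .imp φ ψ => {w | w ∈ MSat le N V φ → w ∈ MSat le N V ψ}
  | .box φ => {w | ∀ v, le w v → v ∈ MSat le N V φ}
  | .bbox φ => N (MSat le N V φ)

namespace NS4Aux

open MForm

/-! ### Tautologies -/

lemma taut_id (a : MForm) : MTaut (a.imp a) := by
  intro v hb ht ha ho hi
  simp only [hi]
  cases v a <;> simp

lemma taut_k (a b : MForm) : MTaut (a.imp (b.imp a)) := by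
  intro v hb ht ha ho hi
  simp only [hi]
  cases v a <;> cases v b <;> simp

lemma taut_s (a b c : MForm) :
    MTaut ((a.imp (b.imp c)).imp ((a.imp b).imp (a.imp c))) := by
  intro v hb ht ha ho hi
  simp only [hi]
  cases v a <;> cases v b <;> cases v c <;> simp

lemma taut_dne (a : MForm) : MTaut (((a.imp .bot).imp .bot).imp a) := by
  intro v hb ht ha ho hi
  simp only [hi, hb]
  cases v a <;> simp

lemma taut_botE (a : MForm) : MTaut (MForm.bot.imp a) := by
  intro v hb ht ha ho hi
  simp only [hi, hb]
  simp

lemma taut_top : MTaut MForm.top := fun _ _ ht _ _ _ => ht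

lemma taut_andI (a b : MForm) : MTaut (a.imp (b.imp (a.and b))) := by
  intro v hb ht ha ho hi
  simp only [hi, ha]
  cases v a <;> cases v b <;> simp

lemma taut_andE1 (a b : MForm) : MTaut ((a.and b).imp a) := by
  intro v hb ht ha ho hi
  simp only [hi, ha]
  cases v a <;> cases v b <;> simp

lemma taut_andE2 (a b : MForm) : MTaut ((a.and b).imp b) := by
  intro v hb ht ha ho hi
  simp only [hi, ha]
  cases v a <;> cases v b <;> simp

lemma taut_orI1 (a b : MForm) : MTaut (a.imp (a.or b)) := by
  intro v hb ht ha ho hi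
  simp only [hi, ho]
  cases v a <;> cases v b <;> simp

lemma taut_orI2 (a b : MForm) : MTaut (b.imp (a.or b)) := by
  intro v hb ht ha ho hi
  simp only [hi, ho]
  cases v a <;> cases v b <;> simp

lemma taut_orE (a b c : MForm) :
    MTaut ((a.imp c).imp ((b.imp c).imp ((a.or b).imp c))) := by
  intro v hb ht ha ho hi
  simp only [hi, ho]
  cases v a <;> cases v b <;> cases v c <;> simp

lemma taut_negimp (a b : MForm) : MTaut ((a.imp .bot).imp (a.imp b)) := by
  intro v hb ht ha ho hi
  simp only [hi, hb]
  cases v a <;> cases v b <;> simp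

lemma taut_absurd (a b : MForm) : MTaut (a.imp ((a.imp .bot).imp b)) := by
  intro v hb ht ha ho hi
  simp only [hi, hb]
  cases v a <;> cases v b <;> simp

/-! ### Derivability from hypotheses -/

inductive Prf (Γ : Set MForm) : MForm → Prop
  | ax {φ} : φ ∈ Γ → Prf Γ φ
  | thm {φ} : NS4 φ → Prf Γ φ
  | mp {φ ψ} : Prf Γ (φ.imp ψ) → Prf Γ φ → Prf Γ ψ

lemma Prf.mono {Γ Δ : Set MForm} (h : Γ ⊆ Δ) {φ} (hp : Prf Γ φ) : Prf Δ φ := by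
  induction hp with
  | ax h' => exact Prf.ax (h h')
  | thm h' => exact Prf.thm h'
  | mp _ _ ih1 ih2 => exact Prf.mp ih1 ih2

lemma prf_empty_iff {φ : MForm} : Prf ∅ φ ↔ NS4 φ := by
  constructor
  · intro h
    induction h with
    | ax h' => exact absurd h' (Set.notMem_empty _)
    | thm h' => exact h'
    | mp _ _ ih1 ih2 => exact NS4.mp ih1 ih2
  · exact Prf.thm

lemma deduction {Γ : Set MForm} {A B : MForm} (h : Prf (insert A Γ) B) :
    Prf Γ (A.imp B) := by
  induction h with
  | @ax χ h' =>
    rcases h' with rfl | h'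
    · exact Prf.thm (NS4.taut (taut_id _))
    · exact Prf.mp (Prf.thm (NS4.taut (taut_k χ A))) (Prf.ax h')
  | @thm χ h' => exact Prf.mp (Prf.thm (NS4.taut (taut_k χ A))) (Prf.thm h')
  | @mp χ ρ _ _ ih1 ih2 =>
    exact Prf.mp (Prf.mp (Prf.thm (NS4.taut (taut_s A χ ρ))) ih1) ih2

lemma prf_finite {Γ : Set MForm} {φ : MForm} (h : Prf Γ φ) :
    ∃ s : Finset MForm, ↑s ⊆ Γ ∧ Prf ↑s φ := by
  classical
  induction h with
  | @ax χ h' => exact ⟨{χ}, by simpa using h', Prf.ax (by simp)⟩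
  | thm h' => exact ⟨∅, by simp, Prf.thm h'⟩
  | mp _ _ ih1 ih2 =>
    obtain ⟨s1, hs1, hp1⟩ := ih1
    obtain ⟨s2, hs2, hp2⟩ := ih2
    refine ⟨s1 ∪ s2, ?_, Prf.mp (hp1.mono ?_) (hp2.mono ?_)⟩
    · intro x hx
      rcases Finset.mem_union.1 (by exact_mod_cast hx) with h | h
      · exact hs1 h
      · exact hs2 h
    · intro x hx; exact Finset.mem_coe.2 (Finset.mem_union_left _ (by exact_mod_cast hx))
    · intro x hx; exact Finset.mem_coe.2 (Finset.mem_union_right _ (by exact_mod_cast hx))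

lemma prf_box {Γ : Set MForm} {φ : MForm} (h : Prf Γ φ) :
    Prf (MForm.box '' Γ) (φ.box) := by
  induction h with
  | ax h' => exact Prf.ax ⟨_, h', rfl⟩
  | thm h' => exact Prf.thm (NS4.nec h')
  | @mp χ ρ _ _ ih1 ih2 => exact Prf.mp (Prf.mp (Prf.thm (NS4.axK χ ρ)) ih1) ih2

/-! ### Consistency and maximal consistent sets -/

def Con (Γ : Set MForm) : Prop := ¬ Prf Γ MForm.bot

def MCS (Γ : Set MForm) : Prop := Con Γ ∧ ∀ φ, φ ∉ Γ → ¬ Con (insert φ Γ)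

lemma chain_finset {C : Set (Set MForm)} (hC : IsChain (· ⊆ ·) C) (hne : C.Nonempty)
    (s : Finset MForm) (hs : ↑s ⊆ ⋃₀ C) : ∃ t ∈ C, ↑s ⊆ t := by
  classical
  induction s using Finset.induction with
  | empty => exact ⟨hne.choose, hne.choose_spec, by simp⟩
  | @insert a s ha ih =>
    have haC : a ∈ ⋃₀ C := hs (by simp)
    obtain ⟨t1, ht1, hat1⟩ := haC
    obtain ⟨t2, ht2, hst2⟩ := ih (fun x hx => hs (by simp [hx]))
    have key : ∀ t ∈ C, a ∈ t → ↑s ⊆ t → ↑(insert a s) ⊆ t := by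
      intro t htC hat hst
      rw [Finset.coe_insert]
      exact Set.insert_subset hat hst
    rcases eq_or_ne t1 t2 with rfl | hne'
    · exact ⟨t1, ht1, key t1 ht1 hat1 hst2⟩
    · rcases hC ht1 ht2 hne' with h | h
      · exact ⟨t2, ht2, key t2 ht2 (h hat1) hst2⟩
      · exact ⟨t1, ht1, key t1 ht1 hat1 (hst2.trans h)⟩

lemma lindenbaum {Γ : Set MForm} (h : Con Γ) : ∃ Δ, Γ ⊆ Δ ∧ MCS Δ := by
  obtain ⟨Δ, hsub, hmax⟩ := zorn_subset_nonempty {Δ | Γ ⊆ Δ ∧ Con Δ}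
    (fun C hCsub hC hne => by
      refine ⟨⋃₀ C, ⟨?_, ?_⟩, fun t ht => Set.subset_sUnion_of_mem ht⟩
      · exact (hCsub hne.choose_spec).1.trans (Set.subset_sUnion_of_mem hne.choose_spec)
      · intro hbad
        obtain ⟨s, hs, hps⟩ := prf_finite hbad
        obtain ⟨t, htC, hst⟩ := chain_finset hC hne s hs
        exact (hCsub htC).2 (hps.mono hst)) Γ ⟨subset_rfl, h⟩
  refine ⟨Δ, hsub, hmax.1.2, fun φ hφ hcon => ?_⟩
  have hsub2 : insert φ Δ ⊆ Δ :=
    hmax.2 ⟨hmax.1.1.trans (Set.subset_insert _ _), hcon⟩ (Set.subset_insert _ _)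
  exact hφ (hsub2 (Set.mem_insert φ Δ))


namespace MCS

variable {Γ : Set MForm}

lemma prf_mem (hΓ : MCS Γ) {φ : MForm} (h : Prf Γ φ) : φ ∈ Γ := by
  by_contra hφ
  have hneg : Prf Γ (φ.imp .bot) := deduction (by
    by_contra hcon
    exact hΓ.2 φ hφ hcon)
  exact hΓ.1 (Prf.mp hneg h)

lemma mem_iff_prf (hΓ : MCS Γ) {φ : MForm} : φ ∈ Γ ↔ Prf Γ φ := ⟨Prf.ax, prf_mem hΓ⟩

lemma thm_mem (hΓ : MCS Γ) {φ : MForm} (h : NS4 φ) : φ ∈ Γ := prf_mem hΓ (Prf.thm h)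

lemma mp_mem (hΓ : MCS Γ) {φ ψ : MForm} (h : φ.imp ψ ∈ Γ) (h' : φ ∈ Γ) : ψ ∈ Γ :=
  prf_mem hΓ (Prf.mp (Prf.ax h) (Prf.ax h'))

lemma bot_not_mem (hΓ : MCS Γ) : MForm.bot ∉ Γ := fun h => hΓ.1 (Prf.ax h)

lemma neg_mem_of_not_mem (hΓ : MCS Γ) {φ : MForm} (h : φ ∉ Γ) : φ.imp .bot ∈ Γ :=
  prf_mem hΓ (deduction (by
    by_contra hcon
    exact hΓ.2 φ h hcon))

lemma imp_mem (hΓ : MCS Γ) {φ ψ : MForm} : φ.imp ψ ∈ Γ ↔ (φ ∈ Γ → ψ ∈ Γ) := by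
  constructor
  · exact fun h h' => mp_mem hΓ h h'
  · intro h
    by_cases hφ : φ ∈ Γ
    · exact mp_mem hΓ (thm_mem hΓ (NS4.taut (taut_k ψ φ))) (h hφ)
    · exact mp_mem hΓ (thm_mem hΓ (NS4.taut (taut_negimp φ ψ))) (neg_mem_of_not_mem hΓ hφ)

lemma and_mem (hΓ : MCS Γ) {φ ψ : MForm} : φ.and ψ ∈ Γ ↔ (φ ∈ Γ ∧ ψ ∈ Γ) := by
  constructor
  · intro h
    exact ⟨mp_mem hΓ (thm_mem hΓ (NS4.taut (taut_andE1 φ ψ))) h,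
      mp_mem hΓ (thm_mem hΓ (NS4.taut (taut_andE2 φ ψ))) h⟩
  · intro ⟨h1, h2⟩
    exact mp_mem hΓ (mp_mem hΓ (thm_mem hΓ (NS4.taut (taut_andI φ ψ))) h1) h2

lemma or_mem (hΓ : MCS Γ) {φ ψ : MForm} : φ.or ψ ∈ Γ ↔ (φ ∈ Γ ∨ ψ ∈ Γ) := by
  constructor
  · intro h
    by_contra hcon
    push_neg at hcon
    have h1 := neg_mem_of_not_mem hΓ hcon.1
    have h2 := neg_mem_of_not_mem hΓ hcon.2
    exact bot_not_mem hΓ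
      (mp_mem hΓ (mp_mem hΓ (mp_mem hΓ (thm_mem hΓ (NS4.taut (taut_orE φ ψ .bot))) h1) h2) h)
  · intro h
    rcases h with h | h
    · exact mp_mem hΓ (thm_mem hΓ (NS4.taut (taut_orI1 φ ψ))) h
    · exact mp_mem hΓ (thm_mem hΓ (NS4.taut (taut_orI2 φ ψ))) h

end MCS

/-! ### Canonical model -/

def CW : Type := {Γ : Set MForm // MCS Γ}

def Cle (Γ Δ : CW) : Prop := ∀ ψ : MForm, ψ.box ∈ Γ.1 → ψ ∈ Δ.1

lemma Cle_refl (Γ : CW) : Cle Γ Γ :=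
  fun ψ h => MCS.mp_mem Γ.2 (MCS.thm_mem Γ.2 (NS4.axT ψ)) h

lemma Cle_trans (Γ Δ E : CW) (h1 : Cle Γ Δ) (h2 : Cle Δ E) : Cle Γ E :=
  fun ψ h => h2 ψ (h1 ψ.box (MCS.mp_mem Γ.2 (MCS.thm_mem Γ.2 (NS4.ax4 ψ)) h))

def CN (X : Set CW) : Set CW :=
  {Γ | ∃ ψ : MForm, ψ.bbox ∈ Γ.1 ∧ ∀ Δ : CW, Cle Γ Δ → (Δ ∈ X ↔ ψ ∈ Δ.1)}

lemma CN_upset (X : Set CW) : IsUpset Cle (CN X) := by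
  rintro Γ Γ' hle ⟨ψ, hψ, hcond⟩
  refine ⟨ψ, ?_, fun Δ hΔ => hcond Δ (Cle_trans _ _ _ hle hΔ)⟩
  exact hle ψ.bbox (MCS.mp_mem Γ.2 (MCS.thm_mem Γ.2 (NS4.axB ψ)) hψ)

lemma CN_loc (Γ : CW) (X : Set CW) : Γ ∈ CN X ↔ Γ ∈ CN (X ∩ {Δ | Cle Γ Δ}) := by
  constructor
  · rintro ⟨ψ, hψ, hcond⟩
    exact ⟨ψ, hψ, fun Δ hΔ => by
      simp only [Set.mem_inter_iff, Set.mem_setOf_eq]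
      exact ⟨fun h => (hcond Δ hΔ).1 h.1, fun h => ⟨(hcond Δ hΔ).2 h, hΔ⟩⟩⟩
  · rintro ⟨ψ, hψ, hcond⟩
    refine ⟨ψ, hψ, fun Δ hΔ => ?_⟩
    have := hcond Δ hΔ
    simp only [Set.mem_inter_iff, Set.mem_setOf_eq] at this
    exact ⟨fun h => this.1 ⟨h, hΔ⟩, fun h => (this.2 h).1⟩

/-- The key box lemma via the existence lemma. -/
lemma box_mem_iff (Γ : CW) (φ : MForm) :
    φ.box ∈ Γ.1 ↔ ∀ Δ : CW, Cle Γ Δ → φ ∈ Δ.1 := by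
  constructor
  · exact fun h Δ hΔ => hΔ φ h
  · intro h
    by_contra hbox
    set Δ₀ : Set MForm := {ψ | ψ.box ∈ Γ.1} with hΔ₀
    have hcon : Con (insert (φ.imp .bot) Δ₀) := by
      intro hbad
      have h1 : Prf Δ₀ φ :=
        Prf.mp (Prf.thm (NS4.taut (taut_dne φ))) (deduction hbad)
      have h2 : Prf (MForm.box '' Δ₀) (φ.box) := prf_box h1
      have h3 : Prf Γ.1 (φ.box) := h2.mono (by rintro x ⟨ψ, hψ, rfl⟩; exact hψ)
      exact hbox (MCS.prf_mem Γ.2 h3)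
    obtain ⟨Δ, hsub, hΔ⟩ := lindenbaum hcon
    have hle : Cle Γ ⟨Δ, hΔ⟩ := fun ψ hψ => hsub (Set.mem_insert_of_mem _ hψ)
    have hφΔ : φ ∈ Δ := h ⟨Δ, hΔ⟩ hle
    have hnφΔ : φ.imp .bot ∈ Δ := hsub (Set.mem_insert _ _)
    exact MCS.bot_not_mem hΔ (MCS.mp_mem hΔ hnφΔ hφΔ)

def CV (p : ℕ) : Set CW := {Γ | MForm.var p ∈ Γ.1}

lemma truth_lemma (φ : MForm) (Γ : CW) :
    Γ ∈ MSat Cle CN CV φ ↔ φ ∈ Γ.1 := by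
  induction φ generalizing Γ with
  | var p => exact Iff.rfl
  | bot => simpa [MSat] using (MCS.bot_not_mem Γ.2).elim
  | top => simpa [MSat] using MCS.thm_mem Γ.2 (NS4.taut taut_top)
  | and φ ψ ih1 ih2 =>
    simp only [MSat, Set.mem_inter_iff, ih1, ih2, MCS.and_mem Γ.2]
  | or φ ψ ih1 ih2 =>
    simp only [MSat, Set.mem_union, ih1, ih2, MCS.or_mem Γ.2]
  | imp φ ψ ih1 ih2 =>
    simp only [MSat, Set.mem_setOf_eq, ih1, ih2, MCS.imp_mem Γ.2]
  | box φ ih =>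
    simp only [MSat, Set.mem_setOf_eq, box_mem_iff Γ φ]
    exact forall_congr' fun Δ => imp_congr_right fun _ => ih Δ
  | bbox φ ih =>
    show Γ ∈ CN (MSat Cle CN CV φ) ↔ _
    have hset : MSat Cle CN CV φ = {Δ : CW | φ ∈ Δ.1} := Set.ext fun Δ => ih Δ
    rw [hset]
    constructor
    · rintro ⟨ψ, hψ, hcond⟩
      have hmiff : (φ.miff ψ).box ∈ Γ.1 := by
        rw [box_mem_iff]
        intro Δ hΔ
        have := hcond Δ hΔ
        simp only [Set.mem_setOf_eq] at this
        exact (MCS.and_mem Δ.2).2 ⟨(MCS.imp_mem Δ.2).2 fun h => this.1 h,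
          (MCS.imp_mem Δ.2).2 fun h => this.2 h⟩
      have h2 : (φ.bbox).miff (ψ.bbox) ∈ Γ.1 :=
        MCS.mp_mem Γ.2 (MCS.thm_mem Γ.2 (NS4.axN φ ψ)) hmiff
      exact MCS.mp_mem Γ.2 ((MCS.and_mem Γ.2).1 h2).2 hψ
    · intro h
      exact ⟨φ, h, fun Δ _ => Iff.rfl⟩

end NS4Aux

namespace NS4Aux

lemma soundness {φ : MForm} (h : NS4 φ) :
    ∀ (W : Type) (le : W → W → Prop),
      (∀ w, le w w) → (∀ a b c, le a b → le b c → le a c) →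
      ∀ N : Set W → Set W,
        (∀ X : Set W, IsUpset le (N X)) →
        (∀ (w : W) (X : Set W), w ∈ N X ↔ w ∈ N (X ∩ {v | le w v})) →
        ∀ (V : ℕ → Set W) (w : W), w ∈ MSat le N V φ := by
  induction h with
  | @taut ψ ht =>
    intro W le hrefl htrans N hup hN V w
    classical
    have hv := ht (fun χ => decide (w ∈ MSat le N V χ)) ?_ ?_ ?_ ?_ ?_
    · exact of_decide_eq_true hv
    · simp [MSat]
    · simp [MSat]
    · intro a b
      by_cases h1 : w ∈ MSat le N V a <;> by_cases h2 : w ∈ MSat le N V b <;>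
        simp [MSat, h1, h2]
    · intro a b
      by_cases h1 : w ∈ MSat le N V a <;> by_cases h2 : w ∈ MSat le N V b <;>
        simp [MSat, h1, h2]
    · intro a b
      by_cases h1 : w ∈ MSat le N V a <;> by_cases h2 : w ∈ MSat le N V b <;>
        simp [MSat, h1, h2]
  | axK φ ψ =>
    intro W le hrefl htrans N hup hN V w
    simp only [MSat, Set.mem_setOf_eq]
    exact fun h1 h2 v hv => h1 v hv (h2 v hv)
  | axT φ =>
    intro W le hrefl htrans N hup hN V w
    simp only [MSat, Set.mem_setOf_eq]
    exact fun h1 => h1 w (hrefl w)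
  | ax4 φ =>
    intro W le hrefl htrans N hup hN V w
    simp only [MSat, Set.mem_setOf_eq]
    exact fun h1 v hv u hu => h1 u (htrans _ _ _ hv hu)
  | axN φ ψ =>
    intro W le hrefl htrans N hup hN V w
    simp only [MForm.miff, MSat, Set.mem_setOf_eq, Set.mem_inter_iff]
    intro h1
    have hkey : MSat le N V φ ∩ {v | le w v} = MSat le N V ψ ∩ {v | le w v} := by
      ext v
      simp only [Set.mem_inter_iff, Set.mem_setOf_eq]
      exact ⟨fun ⟨ha, hb⟩ => ⟨(h1 v hb).1 ha, hb⟩, fun ⟨ha, hb⟩ => ⟨(h1 v hb).2 ha, hb⟩⟩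
    constructor
    · intro h2
      rw [hN w (MSat le N V ψ), ← hkey, ← hN w (MSat le N V φ)]
      exact h2
    · intro h2
      rw [hN w (MSat le N V φ), hkey, ← hN w (MSat le N V ψ)]
      exact h2
  | axB φ =>
    intro W le hrefl htrans N hup hN V w
    simp only [MSat, Set.mem_setOf_eq]
    exact fun h1 v hv => hup _ hv h1
  | @mp φ ψ _ _ ih1 ih2 =>
    intro W le hrefl htrans N hup hN V w
    have h1 := ih1 W le hrefl htrans N hup hN V w
    simp only [MSat, Set.mem_setOf_eq] at h1
    exact h1 (ih2 W le hrefl htrans N hup hN V w)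
  | @nec φ _ ih =>
    intro W le hrefl htrans N hup hN V w
    simp only [MSat, Set.mem_setOf_eq]
    exact fun v _ => ih W le hrefl htrans N hup hN V v

end NS4Aux

/-- Soundness and completeness of `NS4` with respect to its N-frames. -/
theorem stmt12 (φ : MForm) :
    NS4 φ ↔
      ∀ (W : Type) (le : W → W → Prop),
        (∀ w, le w w) → (∀ a b c, le a b → le b c → le a c) →
        ∀ N : Set W → Set W,
          (∀ X : Set W, IsUpset le (N X)) →
          (∀ (w : W) (X : Set W), w ∈ N X ↔ w ∈ N (X ∩ {v | le w v})) →
          ∀ (V : ℕ → Set W) (w : W), w ∈ MSat le N V φ := by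
  constructor
  · exact fun h => NS4Aux.soundness h
  · intro h
    by_contra hns
    have hcon : NS4Aux.Con {φ.imp .bot} := by
      intro hbad
      have h1 : NS4Aux.Prf ∅ ((φ.imp .bot).imp .bot) :=
        NS4Aux.deduction (hbad.mono (by intro x hx; simp at hx; simp [hx]))
      exact hns (NS4.mp (NS4.taut (NS4Aux.taut_dne φ)) (NS4Aux.prf_empty_iff.1 h1))
    obtain ⟨Δ, hsub, hΔ⟩ := NS4Aux.lindenbaum hcon
    have hsat := h NS4Aux.CW NS4Aux.Cle NS4Aux.Cle_refl NS4Aux.Cle_trans NS4Aux.CN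
      NS4Aux.CN_upset NS4Aux.CN_loc NS4Aux.CV ⟨Δ, hΔ⟩
    replace hsat := (NS4Aux.truth_lemma φ ⟨Δ, hΔ⟩).1 hsat
    have hneg : φ.imp .bot ∈ Δ := hsub rfl
    exact NS4Aux.MCS.bot_not_mem hΔ (NS4Aux.MCS.mp_mem hΔ hneg hsat)
end

section
/- For every n ∈ ℕ and all L□-formulas φ₁, …, φₙ, ψ, χ: if NS4 ⊢ (■φ₁ ∧ … ∧ ■φₙ) → (ψ ↔ χ), then NS4 ⊢ (■φ₁ ∧ … ∧ ■φₙ) → (■ψ ↔ ■χ). (For n = 0 the premise and conclusion are ψ ↔ χ and ■ψ ↔ ■χ respectively.) -/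
def bconjM : MForm → List MForm → MForm
  | a, [] => a.bbox
  | a, b :: l => (a.bbox).and (bconjM b l)

/-- `guardM [φ₁,…,φₙ] χ` is `(■φ₁ ∧ … ∧ ■φₙ) → χ` for `n ≥ 1`, and `χ` for `n = 0`. -/
def guardM : List MForm → MForm → MForm
  | [], b => b
  | a :: l, b => (bconjM a l).imp b


lemma taut_imp_trans (a b c : MForm) :
    MTaut ((a.imp b).imp ((b.imp c).imp (a.imp c))) := by
  intro v hb ht hand hor himp
  simp only [himp]
  cases v a <;> cases v b <;> cases v c <;> rfl

lemma ns4_imp_trans {a b c : MForm} (h1 : NS4 (a.imp b)) (h2 : NS4 (b.imp c)) :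
    NS4 (a.imp c) :=
  NS4.mp (NS4.mp (NS4.taut (taut_imp_trans a b c)) h1) h2

lemma taut_pair (a b : MForm) : MTaut (a.imp (b.imp (a.and b))) := by
  intro v hb ht hand hor himp
  simp only [himp, hand]
  cases v a <;> cases v b <;> rfl

lemma taut_uncurry (a b c : MForm) :
    MTaut ((a.imp (b.imp c)).imp ((a.and b).imp c)) := by
  intro v hb ht hand hor himp
  simp only [himp, hand]
  cases v a <;> cases v b <;> cases v c <;> rfl

lemma taut_and_mono (a b c d : MForm) :
    MTaut ((a.imp b).imp ((c.imp d).imp ((a.and c).imp (b.and d)))) := by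
  intro v hb ht hand hor himp
  simp only [himp, hand]
  cases v a <;> cases v b <;> cases v c <;> cases v d <;> rfl

lemma ns4_box_and (a b : MForm) :
    NS4 (((a.box).and (b.box)).imp ((a.and b).box)) := by
  have t1 : NS4 ((a.imp (b.imp (a.and b))).box) :=
    NS4.nec (NS4.taut (taut_pair a b))
  have h1 : NS4 ((a.box).imp ((b.imp (a.and b)).box)) :=
    NS4.mp (NS4.axK a (b.imp (a.and b))) t1
  have h2 : NS4 ((a.box).imp ((b.box).imp ((a.and b).box))) :=
    ns4_imp_trans h1 (NS4.axK b (a.and b))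
  exact NS4.mp (NS4.taut (taut_uncurry (a.box) (b.box) ((a.and b).box))) h2

lemma ns4_bconj_box (l : List MForm) : ∀ a : MForm,
    NS4 ((bconjM a l).imp ((bconjM a l).box)) := by
  induction l with
  | nil => intro a; exact NS4.axB a
  | cons b l ih =>
    intro a
    have h1 : NS4 ((a.bbox).imp ((a.bbox).box)) := NS4.axB a
    have h2 := ih b
    have h3 : NS4 (((a.bbox).and (bconjM b l)).imp
        (((a.bbox).box).and ((bconjM b l).box))) :=
      NS4.mp (NS4.mp (NS4.taut (taut_and_mono _ _ _ _)) h1) h2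
    exact ns4_imp_trans h3 (ns4_box_and (a.bbox) (bconjM b l))

/-- The rules `Rₙ` are derivable in `NS4`: if
`NS4 ⊢ (■φ₁ ∧ … ∧ ■φₙ) → (ψ ↔ χ)` then `NS4 ⊢ (■φ₁ ∧ … ∧ ■φₙ) → (■ψ ↔ ■χ)`. -/
theorem stmt15 (l : List MForm) (ψ χ : MForm)
    (h : NS4 (guardM l (ψ.miff χ))) :
    NS4 (guardM l ((ψ.bbox).miff (χ.bbox))) := by
  cases l with
  | nil =>
    exact NS4.mp (NS4.axN ψ χ) (NS4.nec h)
  | cons a l =>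
    have h1 : NS4 ((bconjM a l).imp ((bconjM a l).box)) := ns4_bconj_box l a
    have h2 : NS4 ((((bconjM a l).imp (ψ.miff χ)).box)) := NS4.nec h
    have h3 : NS4 (((bconjM a l).box).imp ((ψ.miff χ).box)) :=
      NS4.mp (NS4.axK _ _) h2
    exact ns4_imp_trans (ns4_imp_trans h1 h3) (NS4.axN ψ χ)
end

section
/- For every n ∈ ℕ, a modal N-frame (W, N) satisfies condition E_n if and only if it validates the rule R_n, i.e., for all distinct propositional variables p₁, …, pₙ, q, r and every valuation V: if (■p₁ ∧ … ∧ ■pₙ) → (q ↔ r) is true at every point of the model (W, N, V), then (■p₁ ∧ … ∧ ■pₙ) → (■q ↔ ■r) is true at every point of (W, N, V). -/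
inductive BForm : Type
  | var : ℕ → BForm
  | and : BForm → BForm → BForm
  | or : BForm → BForm → BForm
  | imp : BForm → BForm → BForm
  | bbox : BForm → BForm

def BForm.biff (φ ψ : BForm) : BForm := (φ.imp ψ).and (ψ.imp φ)

def BSat {W : Type*} (N : Set W → Set W) (V : ℕ → Set W) : BForm → Set W
  | .var p => V p
  | .and φ ψ => BSat N V φ ∩ BSat N V ψ
  | .or φ ψ => BSat N V φ ∪ BSat N V ψ
  | .imp φ ψ => {w | w ∈ BSat N V φ → w ∈ BSat N V ψ}
  | .bbox φ => N (BSat N V φ)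

def bconjB : ℕ → List ℕ → BForm
  | p, [] => (BForm.var p).bbox
  | p, q :: l => ((BForm.var p).bbox).and (bconjB q l)

def guardB : List ℕ → BForm → BForm
  | [], b => b
  | p :: l, b => (bconjB p l).imp b

def En {W : Type*} (N : Set W → Set W) (n : ℕ) : Prop :=
  ∀ (X : Set W) (Z : Fin n → Set W),
    N X ∩ (⋂ i, N (Z i)) = N (X ∩ ⋂ i, N (Z i)) ∩ ⋂ i, N (Z i)

lemma bconj_sat {W : Type*} (N : Set W → Set W) (V : ℕ → Set W) (p : ℕ) (l : List ℕ) (w : W) :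
    w ∈ BSat N V (bconjB p l) ↔ ∀ x ∈ p :: l, w ∈ N (V x) := by
  induction l generalizing p with
  | nil => simp [bconjB, BSat]
  | cons a l ih => simp [bconjB, BSat, ih]

lemma guard_sat {W : Type*} (N : Set W → Set W) (V : ℕ → Set W) (ps : List ℕ) (b : BForm) (w : W) :
    w ∈ BSat N V (guardB ps b) ↔ ((∀ p ∈ ps, w ∈ N (V p)) → w ∈ BSat N V b) := by
  cases ps with
  | nil => simp [guardB]
  | cons p l => simp [guardB, BSat, bconj_sat]

lemma biff_sat {W : Type*} (N : Set W → Set W) (V : ℕ → Set W) (φ ψ : BForm) (w : W) :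
    w ∈ BSat N V (φ.biff ψ) ↔ (w ∈ BSat N V φ ↔ w ∈ BSat N V ψ) := by
  simp [BForm.biff, BSat]; tauto

/-- A modal N-frame satisfies `Eₙ` iff it validates the rule `Rₙ`. -/
theorem stmt16 {W : Type*} (N : Set W → Set W) (n : ℕ) :
    En N n ↔
      ∀ (ps : List ℕ) (q r : ℕ), ps.length = n → (q :: r :: ps).Nodup →
        ∀ V : ℕ → Set W,
          (∀ w : W, w ∈ BSat N V (guardB ps ((BForm.var q).biff (BForm.var r)))) →
          (∀ w : W, w ∈ BSat N V
              (guardB ps (((BForm.var q).bbox).biff ((BForm.var r).bbox)))) := by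
  constructor
  · intro hE ps q r hlen _ V hyp w
    subst hlen
    rw [guard_sat]
    intro hw
    set G : Set W := {w : W | ∀ p ∈ ps, w ∈ N (V p)} with hG
    have hGeq : G = ⋂ i : Fin ps.length, N (V (ps.get i)) := by
      ext v
      simp only [hG, Set.mem_setOf_eq, Set.mem_iInter, List.mem_iff_get]
      constructor
      · intro h i; exact h _ ⟨i, rfl⟩
      · rintro h x ⟨i, rfl⟩; exact h i
    have hXY : V q ∩ G = V r ∩ G := by
      ext v
      constructor
      · rintro ⟨h1, h2⟩
        exact ⟨((biff_sat N V _ _ v).mp ((guard_sat N V _ _ v).mp (hyp v) h2)).mp h1, h2⟩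
      · rintro ⟨h1, h2⟩
        exact ⟨((biff_sat N V _ _ v).mp ((guard_sat N V _ _ v).mp (hyp v) h2)).mpr h1, h2⟩
    have key : N (V q) ∩ G = N (V r) ∩ G := by
      have h1 := hE (V q) (fun i => V (ps.get i))
      have h2 := hE (V r) (fun i => V (ps.get i))
      rw [← hGeq] at h1 h2
      rw [h1, h2, hXY]
    rw [biff_sat]
    simp only [BSat]
    have hwG : w ∈ G := hw
    constructor
    · intro h; exact (key ▸ (Set.mem_inter h hwG) : w ∈ N (V r) ∩ G).1
    · intro h; exact (key.symm ▸ (Set.mem_inter h hwG) : w ∈ N (V q) ∩ G).1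
  · intro hR X Z
    set G : Set W := ⋂ i, N (Z i) with hG
    set ps : List ℕ := (List.range n).map (· + 2) with hps
    set V : ℕ → Set W := fun m =>
      if m = 0 then X else if m = 1 then X ∩ G
      else if h : m - 2 < n then Z ⟨m - 2, h⟩ else ∅ with hV
    have hlen : ps.length = n := by simp [hps]
    have hnd : (0 :: 1 :: ps).Nodup := by
      simp only [hps, List.nodup_cons, List.mem_cons, List.mem_map, List.mem_range]
      refine ⟨?_, ?_, ?_⟩
      · push_neg; exact ⟨by omega, fun k _ => by omega⟩
      · push_neg; exact fun k _ => by omega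
      · exact List.Nodup.map (fun a b h => by omega) List.nodup_range
    have hVp : ∀ p, ∀ hp : p ∈ ps, V p = Z ⟨p - 2, by simp only [hps, List.mem_map, List.mem_range] at hp; omega⟩ := by
      intro p hp
      simp [hps] at hp
      obtain ⟨k, hk, rfl⟩ := hp
      simp [hV, hk]
    have hGchar : ∀ w : W, (∀ p ∈ ps, w ∈ N (V p)) ↔ w ∈ G := by
      intro w
      constructor
      · intro h
        rw [hG]
        simp only [Set.mem_iInter]
        intro i
        have hmem : (i : ℕ) + 2 ∈ ps := by simp [hps]
        have := h _ hmem
        rwa [hVp _ hmem] at this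
      · intro h p hp
        rw [hVp p hp]
        rw [hG] at h
        simp only [Set.mem_iInter] at h
        exact h _
    have hyp : ∀ w : W, w ∈ BSat N V (guardB ps ((BForm.var 0).biff (BForm.var 1))) := by
      intro w
      rw [guard_sat]
      intro hw
      rw [biff_sat]
      have hwG : w ∈ G := (hGchar w).mp hw
      simp only [BSat, hV]
      simp
      tauto
      
    have conc := hR ps 0 1 hlen hnd V hyp
    have hV0 : V 0 = X := by simp [hV]
    have hV1 : V 1 = X ∩ G := by simp [hV]
    ext w
    constructor
    · rintro ⟨h1, h2⟩
      have := (guard_sat N V ps _ w).mp (conc w) ((hGchar w).mpr h2)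
      rw [biff_sat] at this
      simp only [BSat, hV0, hV1] at this
      exact ⟨this.mp h1, h2⟩
    · rintro ⟨h1, h2⟩
      have := (guard_sat N V ps _ w).mp (conc w) ((hGchar w).mpr h2)
      rw [biff_sat] at this
      simp only [BSat, hV0, hV1] at this
      exact ⟨this.mpr h1, h2⟩
end
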